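/- Let q ∈ ℂ, q ≠ 0, q² ≠ 1, and let u₁, u₂ be invertible elements of a ℂ-algebra with u₁u₂ = q·u₂u₁. Set b_j = ±i(u_j + u_j^{-1})/(q - q^{-1}) for j = 1, 2 (same sign for both). Then b₁²b₂ - [2]b₁b₂b₁ + b₂b₁² = b₂, where [2] = q + q^{-1}. -/

import Mathlib

set_option maxHeartbeats 1000000

private lemma conj_aux {A : Type*} [Ring A] [Algebra ℂ A] (v : Aˣ) (w : A) (c : ℂ)
    (h : (v : A) * w = c • (w * (v : A))) :
    w * (↑v⁻¹ : A) = c • ((↑v⁻¹ : A) * w) := by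
  have h' : (↑v⁻¹ : A) * ((v : A) * w) * (↑v⁻¹ : A)
      = (↑v⁻¹ : A) * (c • (w * (v : A))) * (↑v⁻¹ : A) := by rw [h]
  rw [Units.inv_mul_cancel_left, mul_smul_comm, smul_mul_assoc, mul_assoc,
    Units.mul_inv_cancel_right] at h'
  exact h'

private lemma swap_aux {A : Type*} [Ring A] [Algebra ℂ A] (x y : A) (c : ℂ) (hc : c ≠ 0)
    (h : x * y = c • (y * x)) : y * x = c⁻¹ • (x * y) := by
  rw [h, smul_smul, inv_mul_cancel₀ hc, one_smul]

private lemma ext_aux {A : Type*} [Ring A] [Algebra ℂ A] (x y z : A) (c : ℂ)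
    (h : x * y = c • z) : ∀ t : A, x * (y * t) = c • (z * t) := by
  intro t; rw [← mul_assoc, h, smul_mul_assoc]

theorem qtorus_relation1 {A : Type*} [Ring A] [Algebra ℂ A]
    (q : ℂ) (hq : q ≠ 0) (hq2 : q ^ 2 ≠ 1)
    (u₁ u₂ : Aˣ) (hcomm : (u₁ : A) * u₂ = q • ((u₂ : A) * u₁))
    (ε : ℂ) (hε : ε = 1 ∨ ε = -1)
    (b₁ b₂ : A)
    (hb₁ : b₁ = (ε * Complex.I / (q - q⁻¹)) • ((u₁ : A) + (↑u₁⁻¹ : A)))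
    (hb₂ : b₂ = (ε * Complex.I / (q - q⁻¹)) • ((u₂ : A) + (↑u₂⁻¹ : A))) :
    b₁ * b₁ * b₂ - (q + q⁻¹) • (b₁ * b₂ * b₁) + b₂ * (b₁ * b₁) = b₂ := by
  have hqq : q - q⁻¹ ≠ 0 := by
    intro h
    apply hq2
    have h1 : q * q - 1 = (q - q⁻¹) * q := by field_simp
    rw [h, zero_mul] at h1
    rw [sq]; linear_combination h1
  have hqI : q⁻¹ ≠ 0 := inv_ne_zero hq
  -- commutation lemmas
  have e1 : (u₁ : A) * u₂ = q • ((u₂ : A) * u₁) := hcomm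
  have t1 : (u₂ : A) * (↑u₁⁻¹ : A) = q • ((↑u₁⁻¹ : A) * u₂) := conj_aux u₁ (u₂ : A) q hcomm
  have e2 : (↑u₁⁻¹ : A) * u₂ = q⁻¹ • ((u₂ : A) * ↑u₁⁻¹) := swap_aux _ _ q hq t1
  have t2 : (u₂ : A) * (u₁ : A) = q⁻¹ • ((u₁ : A) * u₂) := swap_aux _ _ q hq hcomm
  have e3 : (u₁ : A) * (↑u₂⁻¹ : A) = q⁻¹ • ((↑u₂⁻¹ : A) * u₁) := conj_aux u₂ (u₁ : A) q⁻¹ t2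
  have e4 : (↑u₁⁻¹ : A) * (↑u₂⁻¹ : A) = q • ((↑u₂⁻¹ : A) * ↑u₁⁻¹) := conj_aux u₂ (↑u₁⁻¹ : A) q t1
  have R1 := ext_aux _ _ _ _ e1
  have R2 := ext_aux _ _ _ _ e2
  have R3 := ext_aux _ _ _ _ e3
  have R4 := ext_aux _ _ _ _ e4
  have hq2q : q * q - 1 ≠ 0 := fun h => hq2 (by rw [sq]; linear_combination h)
  set X : A := (u₁ : A) + (↑u₁⁻¹ : A) with hX
  set Y : A := (u₂ : A) + (↑u₂⁻¹ : A) with hY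
  have key : X * X * Y - (q + q⁻¹) • (X * Y * X) + Y * (X * X) = (-(q - q⁻¹) ^ 2) • Y := by
    rw [hX, hY]
    simp only [mul_add, add_mul, smul_add, smul_sub, mul_assoc, smul_mul_assoc, mul_smul_comm,
      smul_smul, R1, R2, R3, R4, e1, e2, e3, e4,
      Units.inv_mul_cancel_left, Units.mul_inv_cancel_left, Units.mul_inv, Units.inv_mul,
      mul_one, one_mul]
    match_scalars <;> (field_simp; try ring)
  set c : ℂ := ε * Complex.I / (q - q⁻¹) with hc
  have expand : b₁ * b₁ * b₂ - (q + q⁻¹) • (b₁ * b₂ * b₁) + b₂ * (b₁ * b₁)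
      = (c * c * c) • (X * X * Y - (q + q⁻¹) • (X * Y * X) + Y * (X * X)) := by
    rw [hb₁, hb₂]
    simp only [smul_mul_assoc, mul_smul_comm, smul_smul, smul_sub, smul_add]
    module
  have hcs : (c * c * c) * (-(q - q⁻¹) ^ 2) = c := by
    rw [hc]
    rcases hε with rfl | rfl <;> (field_simp; first | linear_combination (-1) * Complex.I_sq | linear_combination Complex.I_sq)
  rw [expand, key, smul_smul, hcs, hb₂]
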